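/- Let f and g be nonzero polynomials in n variables over ℂ. Then the Newton polyhedron of the product is the Minkowski sum: Γ₊(fg) = Γ₊(f) + Γ₊(g), where Γ₊(h) denotes the convex hull in ℝ₊^n of the union over exponents α of h (with nonzero coefficient) of the translated orthants α + ℝ₊^n. -/

import Mathlib

open MvPolynomial
open scoped Pointwise

noncomputable section
set_option maxHeartbeats 1000000

/-- The Newton polyhedron `Γ₊(f)`: the convex hull in `ℝⁿ` of the union over
exponents `α` of `f` (with nonzero coefficient) of the translated orthants
`α + ℝ₊ⁿ = {x | ∀ i, α i ≤ x i}`. -/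
def NewtonPolyhedron {n : ℕ} (f : MvPolynomial (Fin n) ℂ) : Set (Fin n → ℝ) :=
  convexHull ℝ (⋃ α ∈ f.support, {x : Fin n → ℝ | ∀ i, (α i : ℝ) ≤ x i})

namespace NewtonAux

variable {n : ℕ}

/-- Embedding of exponents into `ℝⁿ`. -/
def e (α : Fin n →₀ ℕ) : Fin n → ℝ := fun i => (α i : ℝ)

lemma e_add (α β : Fin n →₀ ℕ) : e (α + β) = e α + e β := by
  funext i
  simp [e]

/-- The nonnegative orthant. -/
def K (n : ℕ) : Set (Fin n → ℝ) := {x | ∀ i, 0 ≤ x i}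

lemma K_convex : Convex ℝ (K n) := by
  intro x hx y hy a b ha hb _
  intro i
  have := hx i
  have := hy i
  simp only [Pi.add_apply, Pi.smul_apply, smul_eq_mul]
  nlinarith

lemma K_closed : IsClosed (K n) := by
  have : K n = ⋂ i, {x : Fin n → ℝ | 0 ≤ x i} := by
    ext x; simp [K, Set.mem_iInter]
  rw [this]
  exact isClosed_iInter fun i => isClosed_le continuous_const (continuous_apply i)

lemma zero_mem_K : (0 : Fin n → ℝ) ∈ K n := fun i => le_refl 0

lemma K_add_K : K n + K n = K n := by
  apply Set.Subset.antisymm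
  · rintro x ⟨a, ha, b, hb, rfl⟩
    intro i
    have := ha i; have := hb i
    simpa [Pi.add_apply] using add_nonneg (ha i) (hb i)
  · intro x hx
    exact ⟨x, hx, 0, zero_mem_K, by simp⟩

lemma newton_eq (h : MvPolynomial (Fin n) ℂ) :
    NewtonPolyhedron h = convexHull ℝ (e '' ↑h.support) + K n := by
  have hset : (⋃ α ∈ h.support, {x : Fin n → ℝ | ∀ i, (α i : ℝ) ≤ x i})
      = e '' ↑h.support + K n := by
    ext x
    simp only [Set.mem_iUnion, Set.mem_setOf_eq, exists_prop]
    constructor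
    · rintro ⟨α, hα, hx⟩
      refine ⟨e α, ⟨α, hα, rfl⟩, x - e α, fun i => by simpa [e] using hx i, by simp⟩
    · rintro ⟨y, ⟨α, hα, rfl⟩, k, hk, rfl⟩
      refine ⟨α, hα, fun i => ?_⟩
      have := hk i
      simp only [Pi.add_apply, e]
      linarith
  rw [NewtonPolyhedron, hset, convexHull_add, K_convex.convexHull_eq]

/-- Key combinatorial lemma: for any linear functional `ℓ` and exponents in the
supports of `f` and `g`, there is an exponent in the support of `f * g` with
`ℓ`-value at most that of the sum. -/
lemma key (f g : MvPolynomial (Fin n) ℂ)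
    (ℓ : (Fin n → ℝ) →ₗ[ℝ] ℝ) {β γ : Fin n →₀ ℕ}
    (hβ : β ∈ f.support) (hγ : γ ∈ g.support) :
    ∃ α ∈ (f * g).support, ℓ (e α) ≤ ℓ (e (β + γ)) := by
  classical
  set W : (Fin n →₀ ℕ) → ℝ := fun α => ℓ (e α) with hW
  have Wadd : ∀ a b : Fin n →₀ ℕ, W (a + b) = W a + W b := by
    intro a b; simp [hW, e_add, map_add]
  -- minimize W over supports
  obtain ⟨β₁, hβ₁, hβ₁min⟩ := f.support.exists_min_image W ⟨β, hβ⟩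
  obtain ⟨γ₁, hγ₁, hγ₁min⟩ := g.support.exists_min_image W ⟨γ, hγ⟩
  set S' : Finset (Fin n →₀ ℕ) := f.support.filter (fun b => W b = W β₁) with hS'
  set T' : Finset (Fin n →₀ ℕ) := g.support.filter (fun b => W b = W γ₁) with hT'
  have hβ₁S' : β₁ ∈ S' := by simp [hS', hβ₁]
  have hγ₁T' : γ₁ ∈ T' := by simp [hT', hγ₁]
  -- lexicographic tie-break
  obtain ⟨β₀, hβ₀, hβ₀min⟩ := S'.exists_min_image (fun b => toLex b) ⟨β₁, hβ₁S'⟩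
  obtain ⟨γ₀, hγ₀, hγ₀min⟩ := T'.exists_min_image (fun b => toLex b) ⟨γ₁, hγ₁T'⟩
  have hβ₀f : β₀ ∈ f.support := (Finset.mem_filter.mp hβ₀).1
  have hγ₀g : γ₀ ∈ g.support := (Finset.mem_filter.mp hγ₀).1
  have hβ₀W : W β₀ = W β₁ := (Finset.mem_filter.mp hβ₀).2
  have hγ₀W : W γ₀ = W γ₁ := (Finset.mem_filter.mp hγ₀).2
  -- the coefficient of `β₀ + γ₀` in `f * g` is a single product
  have hcoeff : (f * g).coeff (β₀ + γ₀) = f.coeff β₀ * g.coeff γ₀ := by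
    rw [coeff_mul]
    apply Finset.sum_eq_single (β₀, γ₀)
    · rintro ⟨β', γ'⟩ hmem hne
      rw [Finset.HasAntidiagonal.mem_antidiagonal] at hmem
      by_contra hprod
      have hβ'f : β' ∈ f.support := by
        rw [mem_support_iff]; intro h0; apply hprod; rw [h0, zero_mul]
      have hγ'g : γ' ∈ g.support := by
        rw [mem_support_iff]; intro h0; apply hprod; rw [h0, mul_zero]
      have h1 : W β₁ ≤ W β' := hβ₁min β' hβ'f
      have h2 : W γ₁ ≤ W γ' := hγ₁min γ' hγ'g
      have hsum : W β' + W γ' = W β₀ + W γ₀ := by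
        rw [← Wadd, ← Wadd, hmem]
      have hWβ' : W β' = W β₁ := by rw [hβ₀W, hγ₀W] at hsum; linarith
      have hWγ' : W γ' = W γ₁ := by rw [hβ₀W, hγ₀W] at hsum; linarith
      have hβ'S' : β' ∈ S' := by simp [hS', hβ'f, hWβ']
      have hγ'T' : γ' ∈ T' := by simp [hT', hγ'g, hWγ']
      have hl1 : toLex β₀ ≤ toLex β' := hβ₀min β' hβ'S'
      have hl2 : toLex γ₀ ≤ toLex γ' := hγ₀min γ' hγ'T'
      have hlsum : toLex β' + toLex γ' = toLex β₀ + toLex γ₀ := by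
        rw [← toLex_add, ← toLex_add, hmem]
      have hβeq : toLex β' = toLex β₀ := by
        by_contra hne'
        have : toLex β₀ < toLex β' := lt_of_le_of_ne hl1 (Ne.symm hne')
        have : toLex β₀ + toLex γ₀ < toLex β' + toLex γ' :=
          add_lt_add_of_lt_of_le this hl2
        rw [hlsum] at this
        exact lt_irrefl _ this
      have hβ'eq : β' = β₀ := toLex.injective hβeq
      have hγ'eq : γ' = γ₀ := add_left_cancel (hβ'eq ▸ hmem)
      exact hne (by rw [hβ'eq, hγ'eq])
    · intro hnotmem
      rw [Finset.HasAntidiagonal.mem_antidiagonal] at hnotmem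
      exact absurd rfl hnotmem
  have hne : (f * g).coeff (β₀ + γ₀) ≠ 0 := by
    rw [hcoeff]
    exact mul_ne_zero (mem_support_iff.mp hβ₀f) (mem_support_iff.mp hγ₀g)
  refine ⟨β₀ + γ₀, mem_support_iff.mpr hne, ?_⟩
  have : W (β₀ + γ₀) ≤ W (β + γ) := by
    rw [Wadd, Wadd, hβ₀W, hγ₀W]
    exact add_le_add (hβ₁min β hβ) (hγ₁min γ hγ)
  exact this

/-- Central claim: each sum of exponents from the supports lies in the
Newton polyhedron of the product. -/
lemma central (f g : MvPolynomial (Fin n) ℂ) {β γ : Fin n →₀ ℕ}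
    (hβ : β ∈ f.support) (hγ : γ ∈ g.support) :
    e (β + γ) ∈ convexHull ℝ (e '' ↑(f * g).support) + K n := by
  by_contra hx
  set Q : Set (Fin n → ℝ) := convexHull ℝ (e '' ↑(f * g).support) + K n with hQdef
  have hconv : Convex ℝ Q := (convex_convexHull ℝ _).add K_convex
  have hcompact : IsCompact (convexHull ℝ (e '' ((f * g).support : Set (Fin n →₀ ℕ)))) :=
    ((Finset.finite_toSet (f * g).support).image e).isCompact_convexHull ℝ
  have hclosed : IsClosed Q := K_closed.add_left_of_isCompact hcompact
  obtain ⟨ℓ, u, hu, hQ⟩ := geometric_hahn_banach_point_closed hconv hclosed hx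
  obtain ⟨α, hα, hle⟩ := key f g ℓ.toLinearMap hβ hγ
  have hαQ : e α ∈ Q := by
    refine ⟨e α, subset_convexHull ℝ _ ⟨α, hα, rfl⟩, 0, zero_mem_K, by simp⟩
  have h1 : u < ℓ (e α) := hQ (e α) hαQ
  have h2 : ℓ (e α) ≤ ℓ (e (β + γ)) := hle
  linarith

end NewtonAux

open NewtonAux

/-- The Newton polyhedron of a product of nonzero polynomials is the Minkowski
sum of the Newton polyhedra: `Γ₊(fg) = Γ₊(f) + Γ₊(g)`. -/
theorem newtonPolyhedron_mul {n : ℕ} (f g : MvPolynomial (Fin n) ℂ)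
    (hf : f ≠ 0) (hg : g ≠ 0) :
    NewtonPolyhedron (f * g) = NewtonPolyhedron f + NewtonPolyhedron g := by
  classical
  rw [newton_eq, newton_eq, newton_eq, add_add_add_comm, K_add_K, ← convexHull_add]
  apply Set.Subset.antisymm
  · apply Set.add_subset_add_right
    apply convexHull_mono
    rintro x ⟨α, hα, rfl⟩
    have hαST : α ∈ f.support + g.support := support_mul f g hα
    rw [Finset.mem_add] at hαST
    obtain ⟨b, hb, c, hc, rfl⟩ := hαST
    exact ⟨e b, ⟨b, hb, rfl⟩, e c, ⟨c, hc, rfl⟩, (e_add b c).symm⟩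
  · have h1 : e '' ↑f.support + e '' ↑g.support
        ⊆ convexHull ℝ (e '' ↑(f * g).support) + K n := by
      rintro x ⟨a, ⟨β, hβ, rfl⟩, b, ⟨γ, hγ, rfl⟩, rfl⟩
      show e β + e γ ∈ _
      rw [← e_add]
      exact central f g hβ hγ
    have h2 : convexHull ℝ (e '' ↑f.support + e '' ↑g.support)
        ⊆ convexHull ℝ (e '' ↑(f * g).support) + K n :=
      convexHull_min h1 ((convex_convexHull ℝ _).add K_convex)
    calc (convexHull ℝ (e '' ↑f.support + e '' ↑g.support) + K n : Set (Fin n → ℝ))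
        ⊆ (convexHull ℝ (e '' ↑(f * g).support) + K n) + K n :=
          Set.add_subset_add_right h2
      _ = convexHull ℝ (e '' ↑(f * g).support) + (K n + K n) := add_assoc _ _ _
      _ = convexHull ℝ (e '' ↑(f * g).support) + K n := by rw [K_add_K]
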